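/- Let M and A be two disjoint antichains in the power set of {1,...,n} with {1,...,n} ∉ M, and suppose for every A ∈ A there is a unique f(A) ∈ M with A ⊂ f(A) (proper containment). Then Σ_{M∈M} 1/C(n,|M|) + Σ_{A∈A} (1/2)·1/C(n,|A|) ≤ 1. -/

import Mathlib

open Finset

section Aux
variable {n : ℕ}

def initSeg (σ : Equiv.Perm (Fin n)) (S : Finset (Fin n)) : Prop :=
  ∀ x : Fin n, σ x ∈ S ↔ (x : ℕ) < S.card

instance (σ : Equiv.Perm (Fin n)) (S : Finset (Fin n)) : Decidable (initSeg σ S) :=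
  inferInstanceAs (Decidable (∀ x : Fin n, σ x ∈ S ↔ (x : ℕ) < S.card))

def permFiberEquiv {α ι : Type*} (g h : α → ι) :
    {σ : Equiv.Perm α // ∀ x, h (σ x) = g x} ≃ ∀ i, {x // g x = i} ≃ {x // h x = i} where
  toFun σ i := Equiv.subtypeEquiv σ.1 (fun x => by rw [σ.2 x])
  invFun F := ⟨((Equiv.sigmaFiberEquiv g).symm.trans
      ((Equiv.sigmaCongrRight F).trans (Equiv.sigmaFiberEquiv h))),
    fun x => ((F (g x)) ⟨x, rfl⟩).2⟩
  left_inv σ := by ext x; rfl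
  right_inv F := by funext i; ext x; obtain ⟨x, rfl⟩ := x; rfl

lemma card_perm_fiber {α ι : Type*} [Fintype α] [DecidableEq α] [Fintype ι] [DecidableEq ι]
    (g h : α → ι)
    (hc : ∀ i, (univ.filter (fun x => g x = i)).card = (univ.filter (fun x => h x = i)).card) :
    (univ.filter (fun σ : Equiv.Perm α => ∀ x, h (σ x) = g x)).card
      = ∏ i, ((univ.filter (fun x => g x = i)).card).factorial := by
  have hc' : ∀ i, Fintype.card {x // g x = i} = Fintype.card {x // h x = i} := by
    intro i
    rw [Fintype.card_subtype, Fintype.card_subtype]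
    exact hc i
  rw [← Fintype.card_subtype, Fintype.card_congr (permFiberEquiv g h), Fintype.card_pi]
  refine Finset.prod_congr rfl fun i _ => ?_
  rw [Fintype.card_equiv (Fintype.equivOfCardEq (hc' i)), Fintype.card_subtype]

lemma card_Ico_fin (lo hi : ℕ) (hh : hi ≤ n) :
    ((univ : Finset (Fin n)).filter (fun x : Fin n => lo ≤ (x : ℕ) ∧ (x : ℕ) < hi)).card = hi - lo := by
  rw [← Nat.card_Ico lo hi]
  refine Finset.card_bij (fun x _ => (x : ℕ)) ?_ ?_ ?_
  · intro x hx
    simp only [Finset.mem_filter] at hx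
    simp [Finset.mem_Ico, hx.2.1, hx.2.2]
  · intro x hx y hy hxy
    exact Fin.ext hxy
  · intro m hm
    simp only [Finset.mem_Ico] at hm
    exact ⟨⟨m, lt_of_lt_of_le hm.2 hh⟩, by simp [hm.1, hm.2], rfl⟩

lemma count_pair (S T : Finset (Fin n)) (hST : S ⊆ T) :
    (univ.filter (fun σ : Equiv.Perm (Fin n) => initSeg σ S ∧ initSeg σ T)).card
      = S.card.factorial * ((T.card - S.card).factorial * (n - T.card).factorial) := by
  have hab : S.card ≤ T.card := Finset.card_le_card hST
  have hbn : T.card ≤ n := by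
    simpa using Finset.card_le_univ T
  set a := S.card with ha
  set b := T.card with hb
  set g : Fin n → Fin 3 := fun x => if (x : ℕ) < a then 0 else if (x : ℕ) < b then 1 else 2 with hg
  set h : Fin n → Fin 3 := fun x => if x ∈ S then 0 else if x ∈ T then 1 else 2 with hh
  have key : ∀ σ : Equiv.Perm (Fin n), (initSeg σ S ∧ initSeg σ T) ↔ ∀ x, h (σ x) = g x := by
    intro σ
    constructor
    · rintro ⟨h1, h2⟩ x
      simp only [hg, hh]
      by_cases hxS : σ x ∈ S
      · have : (x : ℕ) < a := (h1 x).1 hxS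
        simp [hxS, this]
      · have hxa : ¬ (x : ℕ) < a := fun hc => hxS ((h1 x).2 hc)
        by_cases hxT : σ x ∈ T
        · have : (x : ℕ) < b := (h2 x).1 hxT
          simp [hxS, hxT, hxa, this]
        · have hxb : ¬ (x : ℕ) < b := fun hc => hxT ((h2 x).2 hc)
          simp [hxS, hxT, hxa, hxb]
    · intro hgh
      constructor
      · intro x
        have := hgh x
        simp only [hg, hh] at this
        constructor
        · intro hxS
          simp only [hxS, if_pos] at this
          by_contra hxa
          rw [if_neg hxa] at this
          split at this <;> simp_all
        · intro hxa
          rw [if_pos hxa] at this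
          by_contra hxS
          rw [if_neg hxS] at this
          split at this <;> simp_all
      · intro x
        have := hgh x
        simp only [hg, hh] at this
        constructor
        · intro hxT
          by_contra hxb
          rw [if_neg (fun hc : (x:ℕ) < a => hxb (lt_of_lt_of_le hc hab)), if_neg hxb] at this
          split at this <;> simp_all
        · intro hxb
          by_contra hxT
          have hxS : σ x ∉ S := fun hc => hxT (hST hc)
          rw [if_neg hxS, if_neg hxT] at this
          split at this <;> simp_all
  have ha0 : a ≤ n := le_trans hab hbn
  have cardg0 : ((univ : Finset (Fin n)).filter (fun x => g x = 0)).card = a := by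
    have e : (univ : Finset (Fin n)).filter (fun x => g x = 0)
        = (univ : Finset (Fin n)).filter (fun x : Fin n => (0:ℕ) ≤ (x : ℕ) ∧ (x : ℕ) < a) := by
      ext x
      simp only [Finset.mem_filter, Finset.mem_univ, true_and, hg]
      split_ifs with h1 h2 <;> simp_all <;> omega
    rw [e, card_Ico_fin 0 a ha0]
    omega
  have cardg1 : ((univ : Finset (Fin n)).filter (fun x => g x = 1)).card = b - a := by
    have e : (univ : Finset (Fin n)).filter (fun x => g x = 1)
        = (univ : Finset (Fin n)).filter (fun x : Fin n => a ≤ (x : ℕ) ∧ (x : ℕ) < b) := by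
      ext x
      simp only [Finset.mem_filter, Finset.mem_univ, true_and, hg]
      split_ifs with h1 h2 <;> simp_all <;> omega
    rw [e, card_Ico_fin a b hbn]
  have cardg2 : ((univ : Finset (Fin n)).filter (fun x => g x = 2)).card = n - b := by
    have e : (univ : Finset (Fin n)).filter (fun x => g x = 2)
        = (univ : Finset (Fin n)).filter (fun x : Fin n => b ≤ (x : ℕ) ∧ (x : ℕ) < n) := by
      ext x
      simp only [Finset.mem_filter, Finset.mem_univ, true_and, hg]
      split_ifs with h1 h2 <;> simp_all <;> omega
    rw [e, card_Ico_fin b n le_rfl]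
  have cardh0 : ((univ : Finset (Fin n)).filter (fun x => h x = 0)).card = a := by
    have e : (univ : Finset (Fin n)).filter (fun x => h x = 0) = S := by
      ext x
      simp only [Finset.mem_filter, Finset.mem_univ, true_and, hh]
      split_ifs with h1 h2 <;> simp_all
    rw [e]
  have cardh1 : ((univ : Finset (Fin n)).filter (fun x => h x = 1)).card = b - a := by
    have e : (univ : Finset (Fin n)).filter (fun x => h x = 1) = T \ S := by
      ext x
      simp only [Finset.mem_filter, Finset.mem_univ, true_and, hh, Finset.mem_sdiff]
      split_ifs with h1 h2 <;> simp_all <;> exact hST h1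
    rw [e, Finset.card_sdiff_of_subset hST]
  have cardh2 : ((univ : Finset (Fin n)).filter (fun x => h x = 2)).card = n - b := by
    have e : (univ : Finset (Fin n)).filter (fun x => h x = 2) = univ \ T := by
      ext x
      simp only [Finset.mem_filter, Finset.mem_univ, true_and, hh, Finset.mem_sdiff]
      split_ifs with h1 h2 <;> simp_all <;> exact hST h1
    rw [e, Finset.card_sdiff_of_subset (Finset.subset_univ T), Finset.card_univ, Fintype.card_fin]
  have hc : ∀ i : Fin 3, ((univ : Finset (Fin n)).filter (fun x => g x = i)).card
      = ((univ : Finset (Fin n)).filter (fun x => h x = i)).card := by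
    intro i
    fin_cases i
    · exact cardg0.trans cardh0.symm
    · exact cardg1.trans cardh1.symm
    · exact cardg2.trans cardh2.symm
  rw [show S.card.factorial * ((T.card - S.card).factorial * (n - T.card).factorial)
      = ∏ i : Fin 3, (((univ : Finset (Fin n)).filter (fun x => g x = i)).card).factorial from by
    rw [Fin.prod_univ_three, cardg0, cardg1, cardg2, mul_assoc]]
  convert card_perm_fiber g h hc using 2
  ext σ
  simp only [Finset.mem_filter, Finset.mem_univ, true_and]
  exact key σ

lemma initSeg_univ (σ : Equiv.Perm (Fin n)) : initSeg σ (univ : Finset (Fin n)) := by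
  intro x
  simp [Finset.card_univ]

lemma initSeg_subset {σ : Equiv.Perm (Fin n)} {S T : Finset (Fin n)}
    (hS : initSeg σ S) (hT : initSeg σ T) (h : S.card ≤ T.card) : S ⊆ T := by
  intro s hs
  have h1 : σ (σ.symm s) ∈ S := by simpa using hs
  have h2 : ((σ.symm s : Fin n) : ℕ) < S.card := (hS _).1 h1
  have h3 : σ (σ.symm s) ∈ T := (hT _).2 (lt_of_lt_of_le h2 h)
  simpa using h3

lemma initSeg_comparable {σ : Equiv.Perm (Fin n)} {S T : Finset (Fin n)}
    (hS : initSeg σ S) (hT : initSeg σ T) : S ⊆ T ∨ T ⊆ S := by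
  rcases le_total S.card T.card with h | h
  · exact Or.inl (initSeg_subset hS hT h)
  · exact Or.inr (initSeg_subset hT hS h)

lemma count_single (S : Finset (Fin n)) :
    (univ.filter (fun σ : Equiv.Perm (Fin n) => initSeg σ S)).card
      = S.card.factorial * (n - S.card).factorial := by
  have e : (univ.filter (fun σ : Equiv.Perm (Fin n) => initSeg σ S))
      = (univ.filter (fun σ : Equiv.Perm (Fin n) => initSeg σ S ∧ initSeg σ univ)) := by
    ext σ
    simp [initSeg_univ]
  rw [e, count_pair S univ (Finset.subset_univ S)]
  simp [Finset.card_univ]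

end Aux

theorem stmt_6 (n : ℕ) (M A : Finset (Finset (Fin n)))
    (hM : IsAntichain (· ⊆ ·) (M : Set (Finset (Fin n))))
    (hA : IsAntichain (· ⊆ ·) (A : Set (Finset (Fin n))))
    (hdisj : Disjoint M A)
    (hfull : (Finset.univ : Finset (Fin n)) ∉ M)
    (f : Finset (Fin n) → Finset (Fin n))
    (hf : ∀ S ∈ A, f S ∈ M ∧ S ⊂ f S ∧ ∀ T ∈ M, S ⊂ T → T = f S) :
    ∑ S ∈ M, (1 : ℚ) / (n.choose S.card)
      + ∑ S ∈ A, (1 : ℚ) / 2 * (1 / (n.choose S.card)) ≤ 1 := by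
  classical
  set c : Finset (Fin n) → ℕ := fun S => S.card.factorial * (n - S.card).factorial with hcdef
  -- at most one member of an antichain is an initial segment of a fixed permutation
  have anti_le : ∀ (F : Finset (Finset (Fin n))), IsAntichain (· ⊆ ·) (F : Set (Finset (Fin n))) →
      ∀ σ : Equiv.Perm (Fin n), (F.filter (fun S => initSeg σ S)).card ≤ 1 := by
    intro F hF σ
    rw [Finset.card_le_one]
    intro S hS T hT
    simp only [Finset.mem_filter] at hS hT
    by_contra hne
    rcases initSeg_comparable hS.2 hT.2 with h | h
    · exact hF (Finset.mem_coe.mpr hS.1) (Finset.mem_coe.mpr hT.1) hne h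
    · exact hF (Finset.mem_coe.mpr hT.1) (Finset.mem_coe.mpr hS.1) (Ne.symm hne) h
  -- the per-permutation inequality
  have per : ∀ σ : Equiv.Perm (Fin n),
      (M.filter (fun S => initSeg σ S)).card + (A.filter (fun S => initSeg σ S)).card
        ≤ 1 + (A.filter (fun S => initSeg σ S ∧ initSeg σ (f S))).card := by
    intro σ
    have hM1 := anti_le M hM σ
    have hA1 := anti_le A hA σ
    by_cases hMex : ∃ S ∈ M, initSeg σ S
    · by_cases hAex : ∃ S ∈ A, initSeg σ S
      · obtain ⟨Mo, hMo, hMoi⟩ := hMex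
        obtain ⟨Ao, hAo, hAoi⟩ := hAex
        obtain ⟨hfM, hfss, hfuniq⟩ := hf Ao hAo
        have hMonA : Mo ∉ A := Finset.disjoint_left.mp hdisj hMo
        have hMofA : Mo = f Ao := by
          rcases initSeg_comparable hMoi hAoi with h | h
          · exfalso
            have hne : Mo ≠ f Ao := fun he => hfss.not_subset (he ▸ h)
            exact hM (Finset.mem_coe.mpr hMo) (Finset.mem_coe.mpr hfM) hne (h.trans hfss.subset)
          · have hne : Ao ≠ Mo := fun he => hMonA (he ▸ hAo)
            exact hfuniq Mo hMo (Finset.ssubset_iff_subset_ne.mpr ⟨h, hne⟩)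
        have hmem : Ao ∈ A.filter (fun S => initSeg σ S ∧ initSeg σ (f S)) := by
          rw [Finset.mem_filter]
          exact ⟨hAo, hAoi, hMofA ▸ hMoi⟩
        have h1 : 1 ≤ (A.filter (fun S => initSeg σ S ∧ initSeg σ (f S))).card :=
          Finset.card_pos.mpr ⟨Ao, hmem⟩
        omega
      · have h0 : (A.filter (fun S => initSeg σ S)).card = 0 := by
          rw [Finset.card_eq_zero, Finset.filter_eq_empty_iff]
          intro S hS hi
          exact hAex ⟨S, hS, hi⟩
        omega
    · have h0 : (M.filter (fun S => initSeg σ S)).card = 0 := by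
        rw [Finset.card_eq_zero, Finset.filter_eq_empty_iff]
        intro S hS hi
        exact hMex ⟨S, hS, hi⟩
      omega
  -- summation identities
  have sum_single : ∀ F : Finset (Finset (Fin n)),
      ∑ σ : Equiv.Perm (Fin n), (F.filter (fun S => initSeg σ S)).card = ∑ S ∈ F, c S := by
    intro F
    calc ∑ σ : Equiv.Perm (Fin n), (F.filter (fun S => initSeg σ S)).card
        = ∑ σ : Equiv.Perm (Fin n), ∑ S ∈ F, (if initSeg σ S then 1 else 0) := by
          exact Finset.sum_congr rfl fun σ _ => Finset.card_filter _ _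
      _ = ∑ S ∈ F, ∑ σ : Equiv.Perm (Fin n), (if initSeg σ S then 1 else 0) := Finset.sum_comm
      _ = ∑ S ∈ F, c S := by
          refine Finset.sum_congr rfl fun S _ => ?_
          rw [← Finset.card_filter, count_single]
  have sum_pair : ∑ σ : Equiv.Perm (Fin n), (A.filter (fun S => initSeg σ S ∧ initSeg σ (f S))).card
      = ∑ S ∈ A, (univ.filter (fun σ : Equiv.Perm (Fin n) => initSeg σ S ∧ initSeg σ (f S))).card := by
    calc ∑ σ : Equiv.Perm (Fin n), (A.filter (fun S => initSeg σ S ∧ initSeg σ (f S))).card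
        = ∑ σ : Equiv.Perm (Fin n), ∑ S ∈ A, (if initSeg σ S ∧ initSeg σ (f S) then 1 else 0) := by
          exact Finset.sum_congr rfl fun σ _ => Finset.card_filter _ _
      _ = ∑ S ∈ A, ∑ σ : Equiv.Perm (Fin n), (if initSeg σ S ∧ initSeg σ (f S) then 1 else 0) :=
          Finset.sum_comm
      _ = _ := by
          refine Finset.sum_congr rfl fun S _ => ?_
          rw [← Finset.card_filter]
  have pair_le : ∀ S ∈ A,
      2 * (univ.filter (fun σ : Equiv.Perm (Fin n) => initSeg σ S ∧ initSeg σ (f S))).card ≤ c S := by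
    intro S hS
    obtain ⟨hfM, hfss, _⟩ := hf S hS
    rw [count_pair S (f S) hfss.subset]
    have hab : S.card < (f S).card := Finset.card_lt_card hfss
    have hbn : (f S).card ≤ n := by simpa using Finset.card_le_univ (f S)
    have hbn' : (f S).card ≠ n := by
      intro he
      apply hfull
      have : f S = univ := Finset.eq_univ_of_card _ (by rw [he, Fintype.card_fin])
      exact this ▸ hfM
    set a := S.card
    set b := (f S).card
    have hch : (n - a).choose (n - b) * ((b - a).factorial * (n - b).factorial)
        = (n - a).factorial := by
      have h := Nat.add_choose_mul_factorial_mul_factorial (b - a) (n - b)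
      rw [show (b - a) + (n - b) = n - a by omega] at h
      rw [← h]
      ring
    have h2 : 2 ≤ (n - a).choose (n - b) := by
      obtain ⟨k, hk⟩ : ∃ k, n - b = k + 1 := ⟨n - b - 1, by omega⟩
      obtain ⟨m, hm⟩ : ∃ m, n - a = m + 1 := ⟨n - a - 1, by omega⟩
      rw [hk, hm, Nat.choose_succ_succ]
      have p1 : 0 < m.choose k := Nat.choose_pos (by omega)
      have p2 : 0 < m.choose (k + 1) := Nat.choose_pos (by omega)
      simp only [Nat.succ_eq_add_one] at *
      omega
    calc 2 * (a.factorial * ((b - a).factorial * (n - b).factorial))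
        ≤ (n - a).choose (n - b) * (a.factorial * ((b - a).factorial * (n - b).factorial)) :=
          Nat.mul_le_mul_right _ h2
      _ = a.factorial * ((n - a).choose (n - b) * ((b - a).factorial * (n - b).factorial)) := by
          ring
      _ = a.factorial * (n - a).factorial := by rw [hch]
  -- the key natural-number inequality
  have key : 2 * (∑ S ∈ M, c S) + ∑ S ∈ A, c S ≤ 2 * n.factorial := by
    have hsum := Finset.sum_le_sum (fun σ (_ : σ ∈ (univ : Finset (Equiv.Perm (Fin n)))) => per σ)
    rw [Finset.sum_add_distrib, sum_single M, sum_single A, Finset.sum_add_distrib,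
      Finset.sum_const, sum_pair, smul_eq_mul, mul_one] at hsum
    have hcard : (univ : Finset (Equiv.Perm (Fin n))).card = n.factorial := by
      rw [Finset.card_univ, Fintype.card_perm, Fintype.card_fin]
    rw [hcard] at hsum
    have hp : 2 * (∑ S ∈ A, (univ.filter
        (fun σ : Equiv.Perm (Fin n) => initSeg σ S ∧ initSeg σ (f S))).card) ≤ ∑ S ∈ A, c S := by
      rw [Finset.mul_sum]
      exact Finset.sum_le_sum pair_le
    omega
  -- pass to the rationals
  have hNpos : (0 : ℚ) < (n.factorial : ℚ) := by exact_mod_cast Nat.factorial_pos n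
  have hterm : ∀ S : Finset (Fin n),
      (1 : ℚ) / (n.choose S.card) = (c S : ℚ) / (n.factorial : ℚ) := by
    intro S
    have hs : S.card ≤ n := by simpa using Finset.card_le_univ S
    have hchpos : (0 : ℚ) < (n.choose S.card : ℚ) := by exact_mod_cast Nat.choose_pos hs
    rw [div_eq_div_iff (ne_of_gt hchpos) (ne_of_gt hNpos), one_mul]
    have h1 : c S * n.choose S.card = n.factorial := by
      rw [hcdef]
      have := Nat.choose_mul_factorial_mul_factorial hs
      rw [← this]
      ring
    exact_mod_cast h1.symm
  have hrw : ∑ S ∈ M, (1 : ℚ) / (n.choose S.card)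
      + ∑ S ∈ A, (1 : ℚ) / 2 * (1 / (n.choose S.card))
      = ((∑ S ∈ M, c S : ℕ) : ℚ) / n.factorial
        + 1 / 2 * (((∑ S ∈ A, c S : ℕ) : ℚ) / n.factorial) := by
    push_cast
    rw [Finset.sum_div, Finset.sum_div, Finset.mul_sum]
    congr 1
    · exact Finset.sum_congr rfl fun S _ => hterm S
    · exact Finset.sum_congr rfl fun S _ => by rw [hterm S]
  rw [hrw]
  have hkeyQ : 2 * ((∑ S ∈ M, c S : ℕ) : ℚ) + ((∑ S ∈ A, c S : ℕ) : ℚ)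
      ≤ 2 * (n.factorial : ℚ) := by exact_mod_cast key
  have heq : ((∑ S ∈ M, c S : ℕ) : ℚ) / n.factorial
      + 1 / 2 * (((∑ S ∈ A, c S : ℕ) : ℚ) / n.factorial)
      = (2 * ((∑ S ∈ M, c S : ℕ) : ℚ) + ((∑ S ∈ A, c S : ℕ) : ℚ)) / (2 * n.factorial) := by
    field_simp
  rw [heq, div_le_one (by positivity)]
  linarith [hkeyQ]
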